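/- For G-valued random variables X, Y, the entropic Ruzsa distance satisfies d[X;-Y] <= 3 d[X;Y]. -/

import Mathlib

open scoped BigOperators Pointwise
noncomputable section

/-- A finitely supported probability mass function. -/
def IsPMF {α : Type*} (p : α → ℝ) : Prop :=
  (∀ x, 0 ≤ p x) ∧ (Function.support p).Finite ∧ ∑ᶠ x, p x = 1

/-- Shannon entropy of a pmf. -/
def ent {α : Type*} (p : α → ℝ) : ℝ := ∑ᶠ x, -(p x * Real.log (p x))

/-- Convolution of pmfs: the distribution of the sum of independent random variables. -/
def conv {G : Type*} [AddCommGroup G] (p q : G → ℝ) : G → ℝ :=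
  fun z => ∑ᶠ x, p x * q (z - x)

/-- Distribution of the negation. -/
def negp {G : Type*} [AddCommGroup G] (p : G → ℝ) : G → ℝ := fun x => p (-x)

/-- Entropic Ruzsa distance between (the distributions of) two random variables. -/
def rdist {G : Type*} [AddCommGroup G] (p q : G → ℝ) : ℝ :=
  ent (conv p (negp q)) - ent p / 2 - ent q / 2

/-- Distribution of the sum of `n` iid copies. -/
def iterConv {G : Type*} [AddCommGroup G] (p : G → ℝ) : ℕ → G → ℝ
  | 0 => fun x => Set.indicator ({0} : Set G) (fun _ => (1 : ℝ)) x
  | n + 1 => conv (iterConv p n) p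

namespace RdistAux

open Function Real Finset

variable {G : Type*} [AddCommGroup G] {p q r : G → ℝ}

theorem pmf_nonneg (hp : IsPMF p) (x : G) : 0 ≤ p x := hp.1 x

theorem pmf_sum_eq (hp : IsPMF p) {S : Finset G} (hS : support p ⊆ ↑S) :
    ∑ x ∈ S, p x = 1 := by
  rw [← finsum_eq_sum_of_support_subset p hS]; exact hp.2.2

theorem pmf_sum_le (hp : IsPMF p) (S : Finset G) : ∑ x ∈ S, p x ≤ 1 := by
  classical
  have h : ∑ x ∈ S ∪ hp.2.1.toFinset, p x = 1 := by
    apply pmf_sum_eq hp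
    intro x hx
    simp only [coe_union, Set.Finite.coe_toFinset, Set.mem_union]
    exact Or.inr hx
  calc ∑ x ∈ S, p x ≤ ∑ x ∈ S ∪ hp.2.1.toFinset, p x :=
        Finset.sum_le_sum_of_subset_of_nonneg Finset.subset_union_left
          (fun i _ _ => hp.1 i)
    _ = 1 := h

theorem conv_nonneg' (hp : IsPMF p) (hq : IsPMF q) (w : G) : 0 ≤ conv p q w :=
  finsum_nonneg fun x => mul_nonneg (hp.1 x) (hq.1 _)

theorem conv_apply_eq (hq : IsPMF q) {S : Finset G} (hS : support p ⊆ ↑S) (w : G) :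
    conv p q w = ∑ x ∈ S, p x * q (w - x) := by
  apply finsum_eq_sum_of_support_subset
  intro x hx
  exact hS (fun h => hx (by simp [h]))

theorem support_conv (hp : IsPMF p) (hq : IsPMF q) {S T : Finset G} [DecidableEq G]
    (hS : support p ⊆ ↑S) (hT : support q ⊆ ↑T) :
    support (conv p q) ⊆ ↑(S + T) := by
  intro w hw
  have hw' : conv p q w ≠ 0 := hw
  rw [conv_apply_eq hq hS] at hw'
  obtain ⟨x, hxS, hx⟩ := Finset.exists_ne_zero_of_sum_ne_zero hw'
  have h1 : q (w - x) ≠ 0 := fun h => hx (by simp [h])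
  have h2 : w - x ∈ T := hT h1
  have : w = x + (w - x) := by abel
  rw [this]
  exact_mod_cast Finset.add_mem_add hxS h2

/-- key expansion lemma -/
theorem conv_mul_expand (hp : IsPMF p) (hq : IsPMF q) {S T : Finset G}
    (hS : support p ⊆ ↑S) (hT : support q ⊆ ↑T) (L : G → ℝ) :
    ∑ᶠ w, conv p q w * L w = ∑ x ∈ S, ∑ y ∈ T, p x * q y * L (x + y) := by
  classical
  have hsupp : support (fun w => conv p q w * L w) ⊆ ↑(S + T) := by
    intro w hw
    have : conv p q w ≠ 0 := fun h => hw (by simp [h])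
    exact support_conv hp hq hS hT this
  rw [finsum_eq_sum_of_support_subset _ hsupp]
  have : ∀ w ∈ S + T, conv p q w * L w = ∑ x ∈ S, p x * q (w - x) * L w := by
    intro w _
    rw [conv_apply_eq hq hS, Finset.sum_mul]
  rw [Finset.sum_congr rfl this, Finset.sum_comm]
  refine Finset.sum_congr rfl fun x hxS => ?_
  have hsupp2 : support (fun w => p x * q (w - x) * L w) ⊆ ↑(S + T) := by
    intro w hw
    have hq0 : q (w - x) ≠ 0 := fun h => hw (by simp [h])
    have : w = x + (w - x) := by abel
    rw [this]
    exact_mod_cast Finset.add_mem_add hxS (hT hq0)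
  rw [← finsum_eq_sum_of_support_subset _ hsupp2,
    ← finsum_comp_equiv (Equiv.addLeft x) (f := fun w => p x * q (w - x) * L w)]
  have : ∀ y : G, p x * q ((Equiv.addLeft x) y - x) * L ((Equiv.addLeft x) y)
      = p x * q y * L (x + y) := by
    intro y; simp [Equiv.addLeft, add_sub_cancel_left]
  rw [finsum_congr this]
  apply finsum_eq_sum_of_support_subset
  intro y hy
  have : q y ≠ 0 := fun h => hy (by simp [h])
  exact hT this

theorem pmf_conv (hp : IsPMF p) (hq : IsPMF q) : IsPMF (conv p q) := by
  classical
  refine ⟨conv_nonneg' hp hq, ?_, ?_⟩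
  · exact (hp.2.1.toFinset + hq.2.1.toFinset).finite_toSet.subset
      (support_conv hp hq (by simp) (by simp))
  · have := conv_mul_expand hp hq (S := hp.2.1.toFinset) (T := hq.2.1.toFinset)
      (by simp) (by simp) (fun _ => (1:ℝ))
    have h2 : ∑ᶠ w, conv p q w * 1 = ∑ᶠ w, conv p q w := finsum_congr (fun w => mul_one _)
    rw [← h2, this]
    simp only [mul_one]
    rw [← Finset.sum_mul_sum, pmf_sum_eq hp (by simp), pmf_sum_eq hq (by simp), one_mul]
theorem conv_comm' (p q : G → ℝ) : conv p q = conv q p := by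
  funext w
  show ∑ᶠ x, p x * q (w - x) = ∑ᶠ y, q y * p (w - y)
  rw [← finsum_comp_equiv (Equiv.subLeft w) (f := fun x => p x * q (w - x))]
  apply finsum_congr
  intro y
  simp [Equiv.subLeft, mul_comm, sub_sub_cancel]

theorem conv_assoc' (hp : IsPMF p) (hq : IsPMF q) (hr : IsPMF r) :
    conv (conv p q) r = conv p (conv q r) := by
  classical
  funext w
  set A := hp.2.1.toFinset with hA
  set B := hq.2.1.toFinset with hB
  have hSA : support p ⊆ ↑A := by simp [hA]
  have hSB : support q ⊆ ↑B := by simp [hB]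
  rw [conv_apply_eq hr (S := A + B) (support_conv hp hq hSA hSB) w]
  rw [conv_apply_eq (pmf_conv hq hr) hSA w]
  have step1 : ∀ t ∈ A + B, conv p q t * r (w - t) = ∑ x ∈ A, p x * q (t - x) * r (w - t) := by
    intro t _
    rw [conv_apply_eq hq hSA, Finset.sum_mul]
  rw [Finset.sum_congr rfl step1, Finset.sum_comm]
  refine Finset.sum_congr rfl fun x hxA => ?_
  have hsupp2 : support (fun t => p x * q (t - x) * r (w - t)) ⊆ ↑(A + B) := by
    intro t ht
    have hq0 : q (t - x) ≠ 0 := fun h => ht (by simp [h])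
    have : t = x + (t - x) := by abel
    rw [this]
    exact_mod_cast Finset.add_mem_add hxA (hSB hq0)
  rw [← finsum_eq_sum_of_support_subset _ hsupp2,
    ← finsum_comp_equiv (Equiv.addLeft x) (f := fun t => p x * q (t - x) * r (w - t))]
  have h3 : ∀ y : G, p x * q ((Equiv.addLeft x) y - x) * r (w - (Equiv.addLeft x) y)
      = p x * (q y * r (w - x - y)) := by
    intro y
    simp [Equiv.addLeft, add_sub_cancel_left, sub_sub, mul_assoc]
  rw [finsum_congr h3]
  have h4 : support (fun y => p x * (q y * r (w - x - y))) ⊆ ↑B := by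
    intro y hy
    exact hSB (fun h => hy (by simp [h]))
  rw [finsum_eq_sum_of_support_subset _ h4, conv_apply_eq hr hSB, Finset.mul_sum]

theorem pmf_negp (hq : IsPMF q) : IsPMF (negp q) := by
  refine ⟨fun x => hq.1 _, ?_, ?_⟩
  · have : support (negp q) = Neg.neg ⁻¹' (support q) := by
      ext x; simp [negp, Function.mem_support]
    rw [this]
    exact (hq.2.1.preimage (neg_injective.injOn))
  · have h := finsum_comp_equiv (Equiv.neg G) (f := q)
    simp only [Equiv.neg_apply] at h
    show ∑ᶠ x, q (-x) = 1
    rw [h]; exact hq.2.2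

theorem negp_negp : negp (negp q) = q := by funext x; simp [negp]

theorem ent_negp : ent (negp q) = ent q := by
  unfold ent
  rw [← finsum_comp_equiv (Equiv.neg G) (f := fun x => -(q x * Real.log (q x)))]
  rfl

theorem negp_conv : negp (conv p q) = conv (negp p) (negp q) := by
  funext w
  show conv p q (-w) = ∑ᶠ x, p (-x) * q (-(w - x))
  have h := finsum_comp_equiv (Equiv.neg G) (f := fun x => p x * q (-w - x))
  simp only [Equiv.neg_apply] at h
  have h2 : (∑ᶠ x, p (-x) * q (-w - -x)) = ∑ᶠ x, p (-x) * q (-(w - x)) := by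
    apply finsum_congr; intro x; congr 2; abel
  rw [show conv p q (-w) = ∑ᶠ x, p x * q (-w - x) from rfl, ← h, h2]

/-- a single term bounds the convolution from below -/
theorem single_le_conv (hp : IsPMF p) (hq : IsPMF q) (x w : G) :
    p x * q (w - x) ≤ conv p q w := by
  classical
  have hS : support p ⊆ ↑(insert x hp.2.1.toFinset) := by
    intro t ht; simp [ht]
  rw [conv_apply_eq hq hS w]
  exact Finset.single_le_sum (fun t _ => mul_nonneg (hp.1 t) (hq.1 _)) (Finset.mem_insert_self x _)

/-- any partial sum bounds the convolution from below -/
theorem sum_le_conv (hp : IsPMF p) (hq : IsPMF q) (S : Finset G) (w : G) :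
    ∑ x ∈ S, p x * q (w - x) ≤ conv p q w := by
  classical
  have hS : support p ⊆ ↑(S ∪ hp.2.1.toFinset) := by
    intro t ht; simp [ht]
  rw [conv_apply_eq hq hS w]
  exact Finset.sum_le_sum_of_subset_of_nonneg Finset.subset_union_left
    (fun t _ _ => mul_nonneg (hp.1 t) (hq.1 _))

/-- Gibbs-type inequality skeleton -/
theorem gibbs {ι : Type*} (s : Finset ι) (F φ : ι → ℝ) (hF : ∀ i ∈ s, 0 ≤ F i)
    (h1 : ∑ i ∈ s, F i = 1) (hφ : ∀ i ∈ s, 0 < F i → 0 < φ i)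
    (hsum : ∑ i ∈ s, F i * φ i ≤ 1) :
    ∑ i ∈ s, F i * Real.log (φ i) ≤ 0 := by
  have step : ∀ i ∈ s, F i * Real.log (φ i) ≤ F i * φ i - F i := by
    intro i hi
    rcases eq_or_lt_of_le (hF i hi) with h | h
    · simp [← h]
    · have hφi := hφ i hi h
      have := Real.log_le_sub_one_of_pos hφi
      nlinarith
  calc ∑ i ∈ s, F i * Real.log (φ i) ≤ ∑ i ∈ s, (F i * φ i - F i) := Finset.sum_le_sum step
    _ = (∑ i ∈ s, F i * φ i) - 1 := by rw [Finset.sum_sub_distrib, h1]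
    _ ≤ 0 := by linarith
theorem ent_eq_sum {S : Finset G} (hS : support p ⊆ ↑S) :
    ent p = -∑ x ∈ S, p x * Real.log (p x) := by
  unfold ent; rw [finsum_neg_distrib]; congr 1
  apply finsum_eq_sum_of_support_subset
  intro x hx; exact hS fun h => hx (by simp [h])

theorem ent_conv_expand (hp : IsPMF p) (hq : IsPMF q) {S T : Finset G}
    (hS : support p ⊆ ↑S) (hT : support q ⊆ ↑T) :
    ent (conv p q) = -∑ x ∈ S, ∑ y ∈ T, p x * q y * Real.log (conv p q (x + y)) := by
  unfold ent
  rw [finsum_neg_distrib, conv_mul_expand hp hq hS hT (fun w => Real.log (conv p q w))]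

theorem sum_pairify (hq : IsPMF q) {T : Finset G} (hT : support q ⊆ ↑T)
    {S : Finset G} (L : G → ℝ) :
    ∑ x ∈ S, ∑ y ∈ T, p x * q y * L x = ∑ x ∈ S, p x * L x := by
  refine Finset.sum_congr rfl fun x _ => ?_
  have h : ∀ y ∈ T, p x * q y * L x = q y * (p x * L x) := fun y _ => by ring
  rw [Finset.sum_congr rfl h, ← Finset.sum_mul, pmf_sum_eq hq hT, one_mul]

theorem ent_le_ent_conv (hp : IsPMF p) (hq : IsPMF q) : ent p ≤ ent (conv p q) := by
  classical
  set A := hp.2.1.toFinset with hA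
  set B := hq.2.1.toFinset with hB
  have hSA : support p ⊆ ↑A := by simp [hA]
  have hSB : support q ⊆ ↑B := by simp [hB]
  set c := conv p q with hc
  have hcpmf : IsPMF c := pmf_conv hp hq
  set F : G × G → ℝ := fun t => p t.1 * q t.2 with hF
  set φ : G × G → ℝ := fun t => c (t.1 + t.2) / p t.1 with hφ
  have hFnn : ∀ t ∈ A ×ˢ B, 0 ≤ F t := fun t _ => mul_nonneg (hp.1 _) (hq.1 _)
  have key : ∑ t ∈ A ×ˢ B, F t * Real.log (φ t) ≤ 0 := by
    apply gibbs _ _ _ hFnn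
    · rw [Finset.sum_product, ← Finset.sum_mul_sum, pmf_sum_eq hp hSA, pmf_sum_eq hq hSB, one_mul]
    · rintro ⟨x, y⟩ _ hpos
      have hpx : 0 < p x := lt_of_le_of_ne (hp.1 x)
        (fun h0 => by simp only [hF, ← h0, zero_mul] at hpos; exact lt_irrefl 0 hpos)
      have hqy : 0 < q y := lt_of_le_of_ne (hq.1 y)
        (fun h0 => by simp only [hF, ← h0, mul_zero] at hpos; exact lt_irrefl 0 hpos)
      have hcw : 0 < c (x + y) := by
        have h1 := single_le_conv hp hq x (x + y)
        simp only [add_sub_cancel_left] at h1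
        exact lt_of_lt_of_le (mul_pos hpx hqy) h1
      exact div_pos hcw hpx
    · have term : ∀ t ∈ A ×ˢ B, F t * φ t ≤ q t.2 * c (t.1 + t.2) := by
        rintro ⟨x, y⟩ _
        simp only [hF, hφ]
        rcases eq_or_ne (p x) 0 with h | h
        · simp only [h, zero_mul]
          exact mul_nonneg (hq.1 y) (hcpmf.1 _)
        · have : p x * q y * (c (x + y) / p x) = q y * c (x + y) := by
            field_simp
          rw [this]
      calc ∑ t ∈ A ×ˢ B, F t * φ t
          ≤ ∑ t ∈ A ×ˢ B, q t.2 * c (t.1 + t.2) := Finset.sum_le_sum term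
        _ = ∑ w ∈ A + B, ∑ t ∈ (A ×ˢ B).filter (fun t => t.1 + t.2 = w),
              q t.2 * c (t.1 + t.2) := by
            refine (Finset.sum_fiberwise_of_maps_to (fun t ht => ?_) _).symm
            obtain ⟨h1, h2⟩ := Finset.mem_product.mp ht
            exact Finset.add_mem_add h1 h2
        _ ≤ ∑ w ∈ A + B, c w := by
            refine Finset.sum_le_sum fun w _ => ?_
            have e1 : ∀ t ∈ (A ×ˢ B).filter (fun t => t.1 + t.2 = w),
                q t.2 * c (t.1 + t.2) = q t.2 * c w := by
              intro t ht
              rw [(Finset.mem_filter.mp ht).2]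
            rw [Finset.sum_congr rfl e1, ← Finset.sum_mul]
            have hinj : ∀ t₁ ∈ (A ×ˢ B).filter (fun t => t.1 + t.2 = w),
                ∀ t₂ ∈ (A ×ˢ B).filter (fun t => t.1 + t.2 = w),
                t₁.2 = t₂.2 → t₁ = t₂ := by
              rintro ⟨x₁, y₁⟩ h₁ ⟨x₂, y₂⟩ h₂ h
              have e₁ := (Finset.mem_filter.mp h₁).2
              have e₂ := (Finset.mem_filter.mp h₂).2
              simp only at h e₁ e₂ ⊢
              subst h
              have hx : x₁ = x₂ := add_right_cancel (a := x₁) (b := y₁) (by rw [e₁, e₂])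
              rw [hx]
            have hQ : ∑ t ∈ (A ×ˢ B).filter (fun t => t.1 + t.2 = w), q t.2 ≤ 1 := by
              rw [← Finset.sum_image hinj]
              exact pmf_sum_le hq _
            exact mul_le_of_le_one_left (hcpmf.1 w) hQ
        _ ≤ 1 := pmf_sum_le hcpmf _
  have expand : ∑ t ∈ A ×ˢ B, F t * Real.log (φ t)
      = ∑ t ∈ A ×ˢ B, (F t * Real.log (c (t.1 + t.2)) - F t * Real.log (p t.1)) := by
    refine Finset.sum_congr rfl ?_
    rintro ⟨x, y⟩ ht
    rcases eq_or_lt_of_le (hFnn _ ht) with h | h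
    · simp only [hF] at h ⊢
      rw [← h]; simp
    · have hpx : 0 < p x := lt_of_le_of_ne (hp.1 x)
        (fun h0 => by simp only [hF, ← h0, zero_mul] at h; exact lt_irrefl 0 h)
      have hqy : 0 < q y := lt_of_le_of_ne (hq.1 y)
        (fun h0 => by simp only [hF, ← h0, mul_zero] at h; exact lt_irrefl 0 h)
      have hcw : 0 < c (x + y) := by
        have h1 := single_le_conv hp hq x (x + y)
        simp only [add_sub_cancel_left] at h1
        exact lt_of_lt_of_le (mul_pos hpx hqy) h1
      simp only [hφ]
      rw [Real.log_div (ne_of_gt hcw) (ne_of_gt hpx), mul_sub]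
  rw [expand, Finset.sum_sub_distrib] at key
  have e1 : ∑ t ∈ A ×ˢ B, F t * Real.log (c (t.1 + t.2)) = -ent c := by
    rw [ent_conv_expand hp hq hSA hSB, neg_neg, Finset.sum_product]
  have e2 : ∑ t ∈ A ×ˢ B, F t * Real.log (p t.1) = -ent p := by
    rw [Finset.sum_product]
    have := sum_pairify (p := p) hq hSB (S := A) (fun x => Real.log (p x))
    simp only [hF]
    rw [this, ent_eq_sum hSA, neg_neg]
  rw [e1, e2] at key
  linarith
theorem conv_neg_mul_expand (hp : IsPMF p) (hq : IsPMF q) {S T : Finset G}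
    (hS : support p ⊆ ↑S) (hT : support q ⊆ ↑T) (L : G → ℝ) :
    ∑ᶠ w, conv p (negp q) w * L w = ∑ x ∈ S, ∑ y ∈ T, p x * q y * L (x - y) := by
  classical
  have hT' : support (negp q) ⊆ ↑(T.image Neg.neg) := by
    intro x hx
    have h1 : q (-x) ≠ 0 := hx
    have h2 : -x ∈ T := hT h1
    simp only [coe_image, Set.mem_image]
    exact ⟨-x, h2, neg_neg x⟩
  rw [conv_mul_expand hp (pmf_negp hq) hS hT' L]
  refine Finset.sum_congr rfl fun x _ => ?_
  rw [Finset.sum_image (fun a _ b _ h => neg_injective h)]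
  refine Finset.sum_congr rfl fun y _ => ?_
  simp [negp, sub_eq_add_neg]

theorem ent_conv_neg_expand (hp : IsPMF p) (hq : IsPMF q) {S T : Finset G}
    (hS : support p ⊆ ↑S) (hT : support q ⊆ ↑T) :
    ent (conv p (negp q))
      = -∑ x ∈ S, ∑ y ∈ T, p x * q y * Real.log (conv p (negp q) (x - y)) := by
  unfold ent
  rw [finsum_neg_distrib,
    conv_neg_mul_expand hp hq hS hT (fun w => Real.log (conv p (negp q) w))]

theorem conv3_mul_expand (hp : IsPMF p) (hq : IsPMF q) (hr : IsPMF r) {S T U : Finset G}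
    [DecidableEq G]
    (hS : support p ⊆ ↑S) (hT : support q ⊆ ↑T) (hU : support r ⊆ ↑U) (L : G → ℝ) :
    ∑ᶠ w, conv (conv p q) r w * L w
      = ∑ x ∈ S, ∑ y ∈ T, ∑ z ∈ U, p x * q y * r z * L (x + y + z) := by
  have h1 := conv_mul_expand (pmf_conv hp hq) hr (S := S + T)
    (support_conv hp hq hS hT) hU L
  rw [h1]
  have h2 : ∀ t ∈ S + T, ∑ z ∈ U, conv p q t * r z * L (t + z)
      = conv p q t * ∑ z ∈ U, r z * L (t + z) := by
    intro t _
    rw [Finset.mul_sum]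
    exact Finset.sum_congr rfl fun z _ => by ring
  rw [Finset.sum_congr rfl h2]
  have h3 : support (fun t => conv p q t * (∑ z ∈ U, r z * L (t + z))) ⊆ ↑(S + T) := by
    intro t ht
    exact support_conv hp hq hS hT (fun h => ht (by simp [h]))
  rw [← finsum_eq_sum_of_support_subset _ h3,
      conv_mul_expand hp hq hS hT (fun t => ∑ z ∈ U, r z * L (t + z))]
  refine Finset.sum_congr rfl fun x _ => Finset.sum_congr rfl fun y _ => ?_
  rw [Finset.mul_sum]
  exact Finset.sum_congr rfl fun z _ => by ring

theorem ent_conv3_expand (hp : IsPMF p) (hq : IsPMF q) (hr : IsPMF r) {S T U : Finset G}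
    [DecidableEq G]
    (hS : support p ⊆ ↑S) (hT : support q ⊆ ↑T) (hU : support r ⊆ ↑U) :
    ent (conv (conv p q) r)
      = -∑ x ∈ S, ∑ y ∈ T, ∑ z ∈ U,
          p x * q y * r z * Real.log (conv (conv p q) r (x + y + z)) := by
  unfold ent
  rw [finsum_neg_distrib,
    conv3_mul_expand hp hq hr hS hT hU (fun w => Real.log (conv (conv p q) r w))]

section Trip
variable {A B C : Finset G}

theorem trip_in (hr : IsPMF r) (hU : support r ⊆ ↑C) (f : G → G → ℝ) :
    ∑ x ∈ A, ∑ y ∈ B, ∑ z ∈ C, p x * q y * r z * f x y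
      = ∑ x ∈ A, ∑ y ∈ B, p x * q y * f x y := by
  refine Finset.sum_congr rfl fun x _ => Finset.sum_congr rfl fun y _ => ?_
  have h : ∀ z ∈ C, p x * q y * r z * f x y = r z * (p x * q y * f x y) := fun z _ => by ring
  rw [Finset.sum_congr rfl h, ← Finset.sum_mul, pmf_sum_eq hr hU, one_mul]

theorem trip_out (hp : IsPMF p) (hS : support p ⊆ ↑A) (f : G → G → ℝ) :
    ∑ x ∈ A, ∑ y ∈ B, ∑ z ∈ C, p x * q y * r z * f y z
      = ∑ y ∈ B, ∑ z ∈ C, q y * r z * f y z := by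
  have h : ∀ x ∈ A, ∑ y ∈ B, ∑ z ∈ C, p x * q y * r z * f y z
      = p x * ∑ y ∈ B, ∑ z ∈ C, q y * r z * f y z := by
    intro x _
    rw [Finset.mul_sum]
    refine Finset.sum_congr rfl fun y _ => ?_
    rw [Finset.mul_sum]
    exact Finset.sum_congr rfl fun z _ => by ring
  rw [Finset.sum_congr rfl h, ← Finset.sum_mul, pmf_sum_eq hp hS, one_mul]

theorem trip_mid (hq : IsPMF q) (hT : support q ⊆ ↑B) (f : G → G → ℝ) :
    ∑ x ∈ A, ∑ y ∈ B, ∑ z ∈ C, p x * q y * r z * f x z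
      = ∑ x ∈ A, ∑ z ∈ C, p x * r z * f x z := by
  refine Finset.sum_congr rfl fun x _ => ?_
  have h : ∀ y ∈ B, ∑ z ∈ C, p x * q y * r z * f x z
      = q y * ∑ z ∈ C, p x * r z * f x z := by
    intro y _
    rw [Finset.mul_sum]
    exact Finset.sum_congr rfl fun z _ => by ring
  rw [Finset.sum_congr rfl h, ← Finset.sum_mul, pmf_sum_eq hq hT, one_mul]

theorem trip_q (hp : IsPMF p) (hS : support p ⊆ ↑A) (hr : IsPMF r) (hU : support r ⊆ ↑C)
    (g : G → ℝ) :
    ∑ x ∈ A, ∑ y ∈ B, ∑ z ∈ C, p x * q y * r z * g y = ∑ y ∈ B, q y * g y := by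
  rw [trip_out hp hS (f := fun y _ => g y)]
  refine Finset.sum_congr rfl fun y _ => ?_
  have h : ∀ z ∈ C, q y * r z * g y = r z * (q y * g y) := fun z _ => by ring
  rw [Finset.sum_congr rfl h, ← Finset.sum_mul, pmf_sum_eq hr hU, one_mul]

theorem trip_one (hp : IsPMF p) (hS : support p ⊆ ↑A) (hq : IsPMF q) (hT : support q ⊆ ↑B)
    (hr : IsPMF r) (hU : support r ⊆ ↑C) :
    ∑ x ∈ A, ∑ y ∈ B, ∑ z ∈ C, p x * q y * r z = 1 := by
  have h := trip_q (A := A) (B := B) (C := C) (q := q) hp hS hr hU (fun _ => (1:ℝ))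
  simp only [mul_one] at h
  rw [h, pmf_sum_eq hq hT]

end Trip
theorem reg_bound (hp : IsPMF p) (hr : IsPMF r) {A C : Finset G} [DecidableEq G]
    (hSA : support p ⊆ ↑A) (hSC : support r ⊆ ↑C) (c : G → ℝ) (hcn : IsPMF c) :
    ∑ x ∈ A, ∑ z ∈ C, p x * r z * (c (x - z) / conv p (negp r) (x - z)) ≤ 1 := by
  classical
  set a := conv p (negp r) with ha
  have hapmf : IsPMF a := pmf_conv hp (pmf_negp hr)
  have hstep : ∑ x ∈ A, ∑ z ∈ C, p x * r z * (c (x - z) / a (x - z))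
      = ∑ t ∈ A ×ˢ C, p t.1 * r t.2 * (c (t.1 - t.2) / a (t.1 - t.2)) :=
    (Finset.sum_product A C (fun t => p t.1 * r t.2 * (c (t.1 - t.2) / a (t.1 - t.2)))).symm
  rw [hstep]
  calc ∑ t ∈ A ×ˢ C, p t.1 * r t.2 * (c (t.1 - t.2) / a (t.1 - t.2))
      = ∑ w ∈ A - C, ∑ t ∈ (A ×ˢ C).filter (fun t => t.1 - t.2 = w),
          p t.1 * r t.2 * (c (t.1 - t.2) / a (t.1 - t.2)) := by
        refine (Finset.sum_fiberwise_of_maps_to (fun t ht => ?_) _).symm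
        obtain ⟨h1, h2⟩ := Finset.mem_product.mp ht
        exact Finset.sub_mem_sub h1 h2
    _ ≤ ∑ w ∈ A - C, c w := by
        refine Finset.sum_le_sum fun w _ => ?_
        have e1 : ∀ t ∈ (A ×ˢ C).filter (fun t => t.1 - t.2 = w),
            p t.1 * r t.2 * (c (t.1 - t.2) / a (t.1 - t.2))
              = p t.1 * r t.2 * (c w / a w) := by
          intro t ht
          rw [(Finset.mem_filter.mp ht).2]
        rw [Finset.sum_congr rfl e1, ← Finset.sum_mul]
        have hfib : ∑ t ∈ (A ×ˢ C).filter (fun t => t.1 - t.2 = w), p t.1 * r t.2 ≤ a w := by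
          have e2 : ∀ t ∈ (A ×ˢ C).filter (fun t => t.1 - t.2 = w),
              p t.1 * r t.2 = p t.1 * negp r (w - t.1) := by
            intro t ht
            have h3 := (Finset.mem_filter.mp ht).2
            have h4 : t.2 = t.1 - w := by rw [← h3]; abel
            rw [h4]
            simp [negp, neg_sub]
          rw [Finset.sum_congr rfl e2]
          have hinj : ∀ t₁ ∈ (A ×ˢ C).filter (fun t => t.1 - t.2 = w),
              ∀ t₂ ∈ (A ×ˢ C).filter (fun t => t.1 - t.2 = w),
              t₁.1 = t₂.1 → t₁ = t₂ := by
            rintro ⟨x₁, z₁⟩ h₁ ⟨x₂, z₂⟩ h₂ h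
            have e₁ := (Finset.mem_filter.mp h₁).2
            have e₂ := (Finset.mem_filter.mp h₂).2
            simp only at h e₁ e₂
            subst h
            have hz : z₁ = z₂ := by
              have : x₁ - z₁ = x₁ - z₂ := by rw [e₁, e₂]
              exact sub_right_injective this
            rw [hz]
          rw [← Finset.sum_image (g := Prod.fst)
            (f := fun x => p x * negp r (w - x)) hinj]
          exact sum_le_conv hp (pmf_negp hr) _ w
        have h5 : (∑ t ∈ (A ×ˢ C).filter (fun t => t.1 - t.2 = w), p t.1 * r t.2) * (c w / a w)
            ≤ a w * (c w / a w) :=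
          mul_le_mul_of_nonneg_right hfib (div_nonneg (hcn.1 _) (hapmf.1 _))
        refine h5.trans ?_
        rcases eq_or_ne (a w) 0 with h6 | h6
        · rw [h6]; simp [hcn.1 w]
        · rw [mul_comm, div_mul_cancel₀ _ h6]
    _ ≤ 1 := pmf_sum_le hcn _

theorem ent_triangle (hp : IsPMF p) (hq : IsPMF q) (hr : IsPMF r) :
    ent (conv p (negp r)) + ent q ≤ ent (conv p (negp q)) + ent (conv q (negp r)) := by
  classical
  set A := hp.2.1.toFinset with hA
  set B := hq.2.1.toFinset with hB
  set C := hr.2.1.toFinset with hC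
  have hSA : support p ⊆ ↑A := by simp [hA]
  have hSB : support q ⊆ ↑B := by simp [hB]
  have hSC : support r ⊆ ↑C := by simp [hC]
  set u := conv p (negp q) with hu
  set v := conv q (negp r) with hv
  set a := conv p (negp r) with ha
  have hupmf : IsPMF u := pmf_conv hp (pmf_negp hq)
  have hvpmf : IsPMF v := pmf_conv hq (pmf_negp hr)
  have hapmf : IsPMF a := pmf_conv hp (pmf_negp hr)
  set c := conv u v with hc
  have hcpmf : IsPMF c := pmf_conv hupmf hvpmf
  set F : G × G × G → ℝ := fun t => p t.1 * q t.2.1 * r t.2.2 with hF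
  set φ : G × G × G → ℝ :=
    fun t => u (t.1 - t.2.1) * v (t.2.1 - t.2.2) / (a (t.1 - t.2.2) * q t.2.1) with hφ
  have hFnn : ∀ t ∈ A ×ˢ B ×ˢ C, 0 ≤ F t :=
    fun t _ => mul_nonneg (mul_nonneg (hp.1 _) (hq.1 _)) (hr.1 _)
  have hub : ∀ x y : G, p x * q y ≤ u (x - y) := by
    intro x y
    have h := single_le_conv hp (pmf_negp hq) x (x - y)
    have e : x - y - x = -y := by abel
    rw [e] at h
    simpa [negp, neg_neg] using h
  have hvb : ∀ y z : G, q y * r z ≤ v (y - z) := by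
    intro y z
    have h := single_le_conv hq (pmf_negp hr) y (y - z)
    have e : y - z - y = -z := by abel
    rw [e] at h
    simpa [negp, neg_neg] using h
  have hab : ∀ x z : G, p x * r z ≤ a (x - z) := by
    intro x z
    have h := single_le_conv hp (pmf_negp hr) x (x - z)
    have e : x - z - x = -z := by abel
    rw [e] at h
    simpa [negp, neg_neg] using h
  have key : ∑ t ∈ A ×ˢ B ×ˢ C, F t * Real.log (φ t) ≤ 0 := by
    apply gibbs _ _ _ hFnn
    · simp only [Finset.sum_product]
      exact trip_one hp hSA hq hSB hr hSC
    · rintro ⟨x, y, z⟩ _ hpos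
      have h1 : 0 < p x * q y * r z := hpos
      have hpx : 0 < p x := by
        rcases (hp.1 x).eq_or_lt with h | h
        · rw [← h] at h1; simp at h1
        · exact h
      have hqy : 0 < q y := by
        rcases (hq.1 y).eq_or_lt with h | h
        · rw [← h] at h1; simp at h1
        · exact h
      have hrz : 0 < r z := by
        rcases (hr.1 z).eq_or_lt with h | h
        · rw [← h] at h1; simp at h1
        · exact h
      have h2 : 0 < u (x - y) := lt_of_lt_of_le (mul_pos hpx hqy) (hub x y)
      have h3 : 0 < v (y - z) := lt_of_lt_of_le (mul_pos hqy hrz) (hvb y z)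
      have h4 : 0 < a (x - z) := lt_of_lt_of_le (mul_pos hpx hrz) (hab x z)
      exact div_pos (mul_pos h2 h3) (mul_pos h4 hqy)
    · set ψ : G × G × G → ℝ := fun t =>
        p t.1 * r t.2.2 * (u (t.1 - t.2.1) * v (t.2.1 - t.2.2) / a (t.1 - t.2.2)) with hψ
      have hterm : ∀ t ∈ A ×ˢ B ×ˢ C, F t * φ t ≤ ψ t := by
        rintro ⟨x, y, z⟩ _
        show p x * q y * r z * (u (x - y) * v (y - z) / (a (x - z) * q y))
          ≤ p x * r z * (u (x - y) * v (y - z) / a (x - z))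
        rcases eq_or_ne (q y) 0 with h | h
        · rw [h]
          simp only [mul_zero, zero_mul, div_zero]
          exact mul_nonneg (mul_nonneg (hp.1 x) (hr.1 z))
            (div_nonneg (mul_nonneg (hupmf.1 _) (hvpmf.1 _)) (hapmf.1 _))
        · rcases eq_or_ne (a (x - z)) 0 with h2 | h2
          · rw [h2]
            simp
          · apply le_of_eq
            field_simp
      have hψsum : ∑ t ∈ A ×ˢ B ×ˢ C, ψ t ≤ 1 := by
        have hps : ∑ t ∈ A ×ˢ B ×ˢ C, ψ t = ∑ x ∈ A, ∑ y ∈ B, ∑ z ∈ C, ψ (x, y, z) := by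
          simp only [Finset.sum_product]
        rw [hps]
        have hswap : ∀ x ∈ A, ∑ y ∈ B, ∑ z ∈ C, ψ (x, y, z)
            = ∑ z ∈ C, ∑ y ∈ B, ψ (x, y, z) := fun x _ => Finset.sum_comm
        rw [Finset.sum_congr rfl hswap]
        have hin : ∀ x ∈ A, ∀ z ∈ C, ∑ y ∈ B, ψ (x, y, z)
            ≤ p x * r z * (c (x - z) / a (x - z)) := by
          intro x _ z _
          have e : ∀ y ∈ B, ψ (x, y, z)
              = p x * r z / a (x - z) * (u (x - y) * v (y - z)) := by
            intro y _
            show p x * r z * (u (x - y) * v (y - z) / a (x - z)) = _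
            ring
          rw [Finset.sum_congr rfl e, ← Finset.mul_sum]
          have huv : ∑ y ∈ B, u (x - y) * v (y - z) ≤ c (x - z) := by
            have e2 : ∀ y ∈ B, u (x - y) * v (y - z)
                = u (x - y) * v ((x - z) - (x - y)) := by
              intro y _
              congr 2
              abel
            rw [Finset.sum_congr rfl e2]
            have hinj : ∀ y₁ ∈ B, ∀ y₂ ∈ B, x - y₁ = x - y₂ → y₁ = y₂ :=
              fun y₁ _ y₂ _ h => sub_right_injective h
            rw [← Finset.sum_image (g := fun y => x - y)
              (f := fun t => u t * v ((x - z) - t)) hinj]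
            exact sum_le_conv hupmf hvpmf _ _
          calc p x * r z / a (x - z) * ∑ y ∈ B, (u (x - y) * v (y - z))
              ≤ p x * r z / a (x - z) * c (x - z) :=
                mul_le_mul_of_nonneg_left huv
                  (div_nonneg (mul_nonneg (hp.1 x) (hr.1 z)) (hapmf.1 _))
            _ = p x * r z * (c (x - z) / a (x - z)) := by ring
        calc ∑ x ∈ A, ∑ z ∈ C, ∑ y ∈ B, ψ (x, y, z)
            ≤ ∑ x ∈ A, ∑ z ∈ C, p x * r z * (c (x - z) / a (x - z)) :=
              Finset.sum_le_sum fun x hx => Finset.sum_le_sum fun z hz => hin x hx z hz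
          _ ≤ 1 := reg_bound hp hr hSA hSC c hcpmf
      calc ∑ t ∈ A ×ˢ B ×ˢ C, F t * φ t ≤ ∑ t ∈ A ×ˢ B ×ˢ C, ψ t := Finset.sum_le_sum hterm
        _ ≤ 1 := hψsum
  have expand : ∑ t ∈ A ×ˢ B ×ˢ C, F t * Real.log (φ t)
      = ∑ t ∈ A ×ˢ B ×ˢ C, (F t * Real.log (u (t.1 - t.2.1))
          + F t * Real.log (v (t.2.1 - t.2.2))
          - F t * Real.log (a (t.1 - t.2.2)) - F t * Real.log (q t.2.1)) := by
    refine Finset.sum_congr rfl ?_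
    rintro ⟨x, y, z⟩ ht
    rcases eq_or_lt_of_le (hFnn _ ht) with h | h
    · rw [← h]
      simp
    · have h1 : 0 < p x * q y * r z := h
      have hpx : 0 < p x := by
        rcases (hp.1 x).eq_or_lt with h' | h'
        · rw [← h'] at h1; simp at h1
        · exact h'
      have hqy : 0 < q y := by
        rcases (hq.1 y).eq_or_lt with h' | h'
        · rw [← h'] at h1; simp at h1
        · exact h'
      have hrz : 0 < r z := by
        rcases (hr.1 z).eq_or_lt with h' | h'
        · rw [← h'] at h1; simp at h1
        · exact h'
      have h2 : 0 < u (x - y) := lt_of_lt_of_le (mul_pos hpx hqy) (hub x y)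
      have h3 : 0 < v (y - z) := lt_of_lt_of_le (mul_pos hqy hrz) (hvb y z)
      have h4 : 0 < a (x - z) := lt_of_lt_of_le (mul_pos hpx hrz) (hab x z)
      show p x * q y * r z * Real.log (u (x - y) * v (y - z) / (a (x - z) * q y)) = _
      rw [Real.log_div (ne_of_gt (mul_pos h2 h3)) (ne_of_gt (mul_pos h4 hqy)),
        Real.log_mul (ne_of_gt h2) (ne_of_gt h3),
        Real.log_mul (ne_of_gt h4) (ne_of_gt hqy)]
      ring
  rw [expand] at key
  simp only [Finset.sum_add_distrib, Finset.sum_sub_distrib] at key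
  have e1 : ∑ t ∈ A ×ˢ B ×ˢ C, F t * Real.log (u (t.1 - t.2.1)) = -ent u := by
    have h1 : ∑ t ∈ A ×ˢ B ×ˢ C, F t * Real.log (u (t.1 - t.2.1))
        = ∑ x ∈ A, ∑ y ∈ B, ∑ z ∈ C,
            p x * q y * r z * Real.log (u (x - y)) := by
      simp only [Finset.sum_product]
      rfl
    rw [h1, trip_in hr hSC, ent_conv_neg_expand hp hq hSA hSB, neg_neg]
  have e2 : ∑ t ∈ A ×ˢ B ×ˢ C, F t * Real.log (v (t.2.1 - t.2.2)) = -ent v := by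
    have h1 : ∑ t ∈ A ×ˢ B ×ˢ C, F t * Real.log (v (t.2.1 - t.2.2))
        = ∑ x ∈ A, ∑ y ∈ B, ∑ z ∈ C,
            p x * q y * r z * Real.log (v (y - z)) := by
      simp only [Finset.sum_product]
      rfl
    rw [h1, trip_out hp hSA, ent_conv_neg_expand hq hr hSB hSC, neg_neg]
  have e3 : ∑ t ∈ A ×ˢ B ×ˢ C, F t * Real.log (a (t.1 - t.2.2)) = -ent a := by
    have h1 : ∑ t ∈ A ×ˢ B ×ˢ C, F t * Real.log (a (t.1 - t.2.2))
        = ∑ x ∈ A, ∑ y ∈ B, ∑ z ∈ C,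
            p x * q y * r z * Real.log (a (x - z)) := by
      simp only [Finset.sum_product]
      rfl
    rw [h1, trip_mid hq hSB, ent_conv_neg_expand hp hr hSA hSC, neg_neg]
  have e4 : ∑ t ∈ A ×ˢ B ×ˢ C, F t * Real.log (q t.2.1) = -ent q := by
    have h1 : ∑ t ∈ A ×ˢ B ×ˢ C, F t * Real.log (q t.2.1)
        = ∑ x ∈ A, ∑ y ∈ B, ∑ z ∈ C,
            p x * q y * r z * Real.log (q y) := by
      simp only [Finset.sum_product]
      rfl
    rw [h1, trip_q hp hSA hr hSC, ent_eq_sum hSB, neg_neg]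
  rw [e1, e2, e3, e4] at key
  linarith
theorem ent_KV (hp : IsPMF p) (hq : IsPMF q) (hr : IsPMF r) :
    ent (conv (conv p q) r) + ent q ≤ ent (conv p q) + ent (conv q r) := by
  classical
  set A := hp.2.1.toFinset with hA
  set B := hq.2.1.toFinset with hB
  set C := hr.2.1.toFinset with hC
  have hSA : support p ⊆ ↑A := by simp [hA]
  have hSB : support q ⊆ ↑B := by simp [hB]
  have hSC : support r ⊆ ↑C := by simp [hC]
  set m := conv p q with hm
  set n := conv q r with hn
  set s3 := conv (conv p q) r with hs3
  have hmpmf : IsPMF m := pmf_conv hp hq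
  have hnpmf : IsPMF n := pmf_conv hq hr
  have hs3pmf : IsPMF s3 := pmf_conv hmpmf hr
  set F : G × G × G → ℝ := fun t => p t.1 * q t.2.1 * r t.2.2 with hF
  set φ : G × G × G → ℝ :=
    fun t => m (t.1 + t.2.1) * n (t.2.1 + t.2.2)
      / (s3 (t.1 + t.2.1 + t.2.2) * q t.2.1) with hφ
  have hFnn : ∀ t ∈ A ×ˢ B ×ˢ C, 0 ≤ F t :=
    fun t _ => mul_nonneg (mul_nonneg (hp.1 _) (hq.1 _)) (hr.1 _)
  have hmb : ∀ x y : G, p x * q y ≤ m (x + y) := by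
    intro x y
    have h := single_le_conv hp hq x (x + y)
    rwa [add_sub_cancel_left] at h
  have hnb : ∀ y z : G, q y * r z ≤ n (y + z) := by
    intro y z
    have h := single_le_conv hq hr y (y + z)
    rwa [add_sub_cancel_left] at h
  have hs3b : ∀ x y z : G, p x * q y * r z ≤ s3 (x + y + z) := by
    intro x y z
    have h := single_le_conv hmpmf hr (x + y) (x + y + z)
    rw [add_sub_cancel_left] at h
    exact le_trans (mul_le_mul_of_nonneg_right (hmb x y) (hr.1 z)) h
  have key : ∑ t ∈ A ×ˢ B ×ˢ C, F t * Real.log (φ t) ≤ 0 := by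
    apply gibbs _ _ _ hFnn
    · simp only [Finset.sum_product]
      exact trip_one hp hSA hq hSB hr hSC
    · rintro ⟨x, y, z⟩ _ hpos
      have h1 : 0 < p x * q y * r z := hpos
      have hpx : 0 < p x := by
        rcases (hp.1 x).eq_or_lt with h | h
        · rw [← h] at h1; simp at h1
        · exact h
      have hqy : 0 < q y := by
        rcases (hq.1 y).eq_or_lt with h | h
        · rw [← h] at h1; simp at h1
        · exact h
      have hrz : 0 < r z := by
        rcases (hr.1 z).eq_or_lt with h | h
        · rw [← h] at h1; simp at h1
        · exact h
      have h2 : 0 < m (x + y) := lt_of_lt_of_le (mul_pos hpx hqy) (hmb x y)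
      have h3 : 0 < n (y + z) := lt_of_lt_of_le (mul_pos hqy hrz) (hnb y z)
      have h4 : 0 < s3 (x + y + z) := lt_of_lt_of_le h1 (hs3b x y z)
      exact div_pos (mul_pos h2 h3) (mul_pos h4 hqy)
    · set ψ : G × G × G → ℝ := fun t =>
        (p t.1 * n (t.1 + t.2.1 + t.2.2 - t.1)) * (r t.2.2 * m (t.1 + t.2.1 + t.2.2 - t.2.2))
          / s3 (t.1 + t.2.1 + t.2.2) with hψ
      have hψnn : ∀ t, 0 ≤ ψ t := fun t =>
        div_nonneg (mul_nonneg (mul_nonneg (hp.1 _) (hnpmf.1 _))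
          (mul_nonneg (hr.1 _) (hmpmf.1 _))) (hs3pmf.1 _)
      have hterm : ∀ t ∈ A ×ˢ B ×ˢ C, F t * φ t ≤ ψ t := by
        rintro ⟨x, y, z⟩ _
        show p x * q y * r z * (m (x + y) * n (y + z) / (s3 (x + y + z) * q y))
          ≤ (p x * n (x + y + z - x)) * (r z * m (x + y + z - z)) / s3 (x + y + z)
        have e1 : x + y + z - x = y + z := by abel
        have e2 : x + y + z - z = x + y := by abel
        rw [e1, e2]
        rcases eq_or_ne (q y) 0 with h | h
        · rw [h]
          simp only [mul_zero, zero_mul, div_zero]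
          exact div_nonneg (mul_nonneg (mul_nonneg (hp.1 _) (hnpmf.1 _))
            (mul_nonneg (hr.1 _) (hmpmf.1 _))) (hs3pmf.1 _)
        · rcases eq_or_ne (s3 (x + y + z)) 0 with h2 | h2
          · rw [h2]
            simp
          · apply le_of_eq
            field_simp
      have hψsum : ∑ t ∈ A ×ˢ B ×ˢ C, ψ t ≤ 1 := by
        calc ∑ t ∈ A ×ˢ B ×ˢ C, ψ t
            = ∑ w ∈ A + B + C, ∑ t ∈ (A ×ˢ B ×ˢ C).filter
                (fun t => t.1 + t.2.1 + t.2.2 = w), ψ t := by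
              refine (Finset.sum_fiberwise_of_maps_to (fun t ht => ?_) _).symm
              rw [Finset.mem_product] at ht
              obtain ⟨h1, h2⟩ := ht
              rw [Finset.mem_product] at h2
              exact Finset.add_mem_add (Finset.add_mem_add h1 h2.1) h2.2
          _ ≤ ∑ w ∈ A + B + C, s3 w := by
              refine Finset.sum_le_sum fun w _ => ?_
              have e1 : ∀ t ∈ (A ×ˢ B ×ˢ C).filter (fun t => t.1 + t.2.1 + t.2.2 = w),
                  ψ t = (p t.1 * n (w - t.1)) * (r t.2.2 * m (w - t.2.2)) / s3 w := by
                intro t ht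
                have h3 := (Finset.mem_filter.mp ht).2
                show (p t.1 * n (t.1 + t.2.1 + t.2.2 - t.1))
                    * (r t.2.2 * m (t.1 + t.2.1 + t.2.2 - t.2.2)) / s3 (t.1 + t.2.1 + t.2.2) = _
                rw [h3]
              rw [Finset.sum_congr rfl e1]
              have himg : ∑ t ∈ (A ×ˢ B ×ˢ C).filter (fun t => t.1 + t.2.1 + t.2.2 = w),
                  (p t.1 * n (w - t.1)) * (r t.2.2 * m (w - t.2.2)) / s3 w
                  ≤ ∑ s ∈ A ×ˢ C, (p s.1 * n (w - s.1)) * (r s.2 * m (w - s.2)) / s3 w := by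
                have hinj : ∀ t₁ ∈ (A ×ˢ B ×ˢ C).filter (fun t => t.1 + t.2.1 + t.2.2 = w),
                    ∀ t₂ ∈ (A ×ˢ B ×ˢ C).filter (fun t => t.1 + t.2.1 + t.2.2 = w),
                    (t₁.1, t₁.2.2) = (t₂.1, t₂.2.2) → t₁ = t₂ := by
                  rintro ⟨x₁, y₁, z₁⟩ h₁ ⟨x₂, y₂, z₂⟩ h₂ h
                  have e₁ := (Finset.mem_filter.mp h₁).2
                  have e₂ := (Finset.mem_filter.mp h₂).2
                  simp only [Prod.mk.injEq] at h e₁ e₂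
                  obtain ⟨hx, hz⟩ := h
                  subst hx; subst hz
                  have hy : y₁ = y₂ := by
                    have : x₁ + y₁ + z₁ = x₁ + y₂ + z₁ := by rw [e₁, e₂]
                    have h5 : y₁ + (x₁ + z₁) = y₂ + (x₁ + z₁) := by
                      rw [show y₁ + (x₁ + z₁) = x₁ + y₁ + z₁ by abel, this]; abel
                    exact add_right_cancel h5
                  rw [hy]
                rw [← Finset.sum_image (g := fun t : G × G × G => (t.1, t.2.2))
                  (f := fun s : G × G => (p s.1 * n (w - s.1)) * (r s.2 * m (w - s.2)) / s3 w)
                  hinj]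
                refine Finset.sum_le_sum_of_subset_of_nonneg ?_ (fun s _ _ =>
                  div_nonneg (mul_nonneg (mul_nonneg (hp.1 _) (hnpmf.1 _))
                    (mul_nonneg (hr.1 _) (hmpmf.1 _))) (hs3pmf.1 _))
                intro s hs
                rw [Finset.mem_image] at hs
                obtain ⟨t, ht, rfl⟩ := hs
                have h6 := (Finset.mem_filter.mp ht).1
                rw [Finset.mem_product] at h6
                obtain ⟨h7, h8⟩ := h6
                rw [Finset.mem_product] at h8
                exact Finset.mem_product.mpr ⟨h7, h8.2⟩
              refine himg.trans ?_
              have hfact : ∑ s ∈ A ×ˢ C, (p s.1 * n (w - s.1)) * (r s.2 * m (w - s.2)) / s3 w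
                  = (∑ x ∈ A, p x * n (w - x)) * (∑ z ∈ C, r z * m (w - z)) / s3 w := by
                rw [Finset.sum_mul_sum, Finset.sum_div]
                rw [Finset.sum_product]
                refine Finset.sum_congr rfl fun x _ => ?_
                rw [Finset.sum_div]
              rw [hfact]
              have hS1 : ∑ x ∈ A, p x * n (w - x) ≤ s3 w := by
                have h9 := sum_le_conv hp hnpmf A w
                have h10 : conv p n = s3 := by
                  rw [hn, hs3, ← conv_assoc' hp hq hr]
                rwa [h10] at h9
              have hS2 : ∑ z ∈ C, r z * m (w - z) ≤ s3 w := by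
                have h9 := sum_le_conv hr hmpmf C w
                have h10 : conv r m = s3 := by
                  rw [conv_comm' r m]
                rwa [h10] at h9
              have hS1nn : 0 ≤ ∑ x ∈ A, p x * n (w - x) :=
                Finset.sum_nonneg fun x _ => mul_nonneg (hp.1 x) (hnpmf.1 _)
              have hS2nn : 0 ≤ ∑ z ∈ C, r z * m (w - z) :=
                Finset.sum_nonneg fun z _ => mul_nonneg (hr.1 z) (hmpmf.1 _)
              rcases eq_or_ne (s3 w) 0 with h11 | h11
              · rw [h11, div_zero]
              · have hpos : 0 < s3 w := lt_of_le_of_ne (hs3pmf.1 w) (Ne.symm h11)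
                rw [div_le_iff₀ hpos]
                exact mul_le_mul hS1 hS2 hS2nn (le_trans hS1nn hS1)
          _ ≤ 1 := pmf_sum_le hs3pmf _
      calc ∑ t ∈ A ×ˢ B ×ˢ C, F t * φ t ≤ ∑ t ∈ A ×ˢ B ×ˢ C, ψ t := Finset.sum_le_sum hterm
        _ ≤ 1 := hψsum
  have expand : ∑ t ∈ A ×ˢ B ×ˢ C, F t * Real.log (φ t)
      = ∑ t ∈ A ×ˢ B ×ˢ C, (F t * Real.log (m (t.1 + t.2.1))
          + F t * Real.log (n (t.2.1 + t.2.2))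
          - F t * Real.log (s3 (t.1 + t.2.1 + t.2.2)) - F t * Real.log (q t.2.1)) := by
    refine Finset.sum_congr rfl ?_
    rintro ⟨x, y, z⟩ ht
    rcases eq_or_lt_of_le (hFnn _ ht) with h | h
    · rw [← h]
      simp
    · have h1 : 0 < p x * q y * r z := h
      have hpx : 0 < p x := by
        rcases (hp.1 x).eq_or_lt with h' | h'
        · rw [← h'] at h1; simp at h1
        · exact h'
      have hqy : 0 < q y := by
        rcases (hq.1 y).eq_or_lt with h' | h'
        · rw [← h'] at h1; simp at h1
        · exact h'
      have hrz : 0 < r z := by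
        rcases (hr.1 z).eq_or_lt with h' | h'
        · rw [← h'] at h1; simp at h1
        · exact h'
      have h2 : 0 < m (x + y) := lt_of_lt_of_le (mul_pos hpx hqy) (hmb x y)
      have h3 : 0 < n (y + z) := lt_of_lt_of_le (mul_pos hqy hrz) (hnb y z)
      have h4 : 0 < s3 (x + y + z) := lt_of_lt_of_le h1 (hs3b x y z)
      show p x * q y * r z * Real.log (m (x + y) * n (y + z) / (s3 (x + y + z) * q y)) = _
      rw [Real.log_div (ne_of_gt (mul_pos h2 h3)) (ne_of_gt (mul_pos h4 hqy)),
        Real.log_mul (ne_of_gt h2) (ne_of_gt h3),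
        Real.log_mul (ne_of_gt h4) (ne_of_gt hqy)]
      ring
  rw [expand] at key
  simp only [Finset.sum_add_distrib, Finset.sum_sub_distrib] at key
  have e1 : ∑ t ∈ A ×ˢ B ×ˢ C, F t * Real.log (m (t.1 + t.2.1)) = -ent m := by
    have h1 : ∑ t ∈ A ×ˢ B ×ˢ C, F t * Real.log (m (t.1 + t.2.1))
        = ∑ x ∈ A, ∑ y ∈ B, ∑ z ∈ C, p x * q y * r z * Real.log (m (x + y)) := by
      simp only [Finset.sum_product]
      rfl
    rw [h1, trip_in hr hSC, ent_conv_expand hp hq hSA hSB, neg_neg]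
  have e2 : ∑ t ∈ A ×ˢ B ×ˢ C, F t * Real.log (n (t.2.1 + t.2.2)) = -ent n := by
    have h1 : ∑ t ∈ A ×ˢ B ×ˢ C, F t * Real.log (n (t.2.1 + t.2.2))
        = ∑ x ∈ A, ∑ y ∈ B, ∑ z ∈ C, p x * q y * r z * Real.log (n (y + z)) := by
      simp only [Finset.sum_product]
      rfl
    rw [h1, trip_out hp hSA, ent_conv_expand hq hr hSB hSC, neg_neg]
  have e3 : ∑ t ∈ A ×ˢ B ×ˢ C, F t * Real.log (s3 (t.1 + t.2.1 + t.2.2)) = -ent s3 := by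
    have h1 : ∑ t ∈ A ×ˢ B ×ˢ C, F t * Real.log (s3 (t.1 + t.2.1 + t.2.2))
        = ∑ x ∈ A, ∑ y ∈ B, ∑ z ∈ C, p x * q y * r z * Real.log (s3 (x + y + z)) := by
      simp only [Finset.sum_product]
      rfl
    rw [h1, ent_conv3_expand hp hq hr hSA hSB hSC, neg_neg]
  have e4 : ∑ t ∈ A ×ˢ B ×ˢ C, F t * Real.log (q t.2.1) = -ent q := by
    have h1 : ∑ t ∈ A ×ˢ B ×ˢ C, F t * Real.log (q t.2.1)
        = ∑ x ∈ A, ∑ y ∈ B, ∑ z ∈ C, p x * q y * r z * Real.log (q y) := by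
      simp only [Finset.sum_product]
      rfl
    rw [h1, trip_q hp hSA hr hSC, ent_eq_sum hSB, neg_neg]
  rw [e1, e2, e3, e4] at key
  linarith
theorem rdist_symm' (hp : IsPMF p) (hq : IsPMF q) : rdist p q = rdist q p := by
  unfold rdist
  have h : ent (conv p (negp q)) = ent (conv q (negp p)) := by
    rw [← ent_negp (q := conv p (negp q)), negp_conv, negp_negp, conv_comm' (negp p) q]
  rw [h]
  ring

theorem rdist_triangle' (hp : IsPMF p) (hq : IsPMF q) (hr : IsPMF r) :
    rdist p r ≤ rdist p q + rdist q r := by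
  unfold rdist
  have := ent_triangle hp hq hr
  linarith

end RdistAux

open RdistAux in
/-- `d[X; -Y] ≤ 3 d[X;Y]`. -/
theorem rdist_neg_le_three_rdist {G : Type*} [AddCommGroup G] (p q : G → ℝ)
    (hp : IsPMF p) (hq : IsPMF q) :
    rdist p (negp q) ≤ 3 * rdist p q := by
  classical
  have hnq : IsPMF (negp q) := pmf_negp hq
  have h1 : rdist p (negp q) = ent (conv p q) - ent p / 2 - ent q / 2 := by
    unfold rdist
    rw [negp_negp, ent_negp]
  have h2 : ent (conv p q) ≤ ent (conv (conv p q) (negp q)) :=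
    ent_le_ent_conv (pmf_conv hp hq) hnq
  have h3 := ent_KV hp hnq hq
  have h4 : conv (conv p (negp q)) q = conv (conv p q) (negp q) := by
    rw [conv_assoc' hp hnq hq, conv_comm' (negp q) q, ← conv_assoc' hp hq hnq]
  rw [h4, ent_negp, conv_comm' (negp q) q] at h3
  have htri : rdist q q ≤ rdist q p + rdist p q := rdist_triangle' hq hp hq
  have hsymm : rdist q p = rdist p q := rdist_symm' hq hp
  have e_pq : rdist p q = ent (conv p (negp q)) - ent p / 2 - ent q / 2 := rfl
  have e_qq : rdist q q = ent (conv q (negp q)) - ent q / 2 - ent q / 2 := rfl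
  linarith
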